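/- Fix integers n ≥ 1 and d ≥ n. Let G be the square matrix indexed by the symmetric group S_n with entries G(σ,τ) = d^{c(στ^{−1})}, where c(π) is the number of cycles of the permutation π (fixed points counted). Then G is invertible, and its inverse W = G^{−1} (the Weingarten matrix) satisfies, for every τ ∈ S_n, Σ_{σ∈S_n} W(σ,τ) = 1 / (n! · C(d+n−1, n)), where C(d+n−1,n) is the binomial coefficient. -/

import Mathlib

open scoped BigOperators
open Matrix

noncomputable section

namespace MagicGap

/-- Total number of cycles of a permutation of `Fin n`, fixed points included. -/
def cycleCount {n : ℕ} (π : Equiv.Perm (Fin n)) : ℕ :=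
  π.cycleType.card + (n - π.support.card)

section Aux

open Equiv Equiv.Perm MulAction

variable {n d : ℕ}

lemma sc_apply_eq {π : Perm (Fin n)} {g : Fin n → Fin d} (hg : g ∘ ⇑π = g)
    {x y : Fin n} (h : π.SameCycle x y) : g x = g y := by
  obtain ⟨i, _, rfl⟩ := h.exists_pow_eq'
  clear * - hg
  induction i with
  | zero => simp
  | succ k ih =>
    rw [pow_succ', Perm.mul_apply]
    have h2 : g (π ((π ^ k) x)) = g ((π ^ k) x) := congrFun hg _
    rw [h2]; exact ih

/-- Functions fixed under precomposition with `π` correspond to functions on the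
set of cycles of `π`. -/
def fixedEquiv (π : Perm (Fin n)) :
    {g : Fin n → Fin d // g ∘ ⇑π = g} ≃ (Quotient (SameCycle.setoid π) → Fin d) where
  toFun g := Quotient.lift g.1 fun _ _ h => sc_apply_eq g.2 h
  invFun F := ⟨fun x => F ⟦x⟧, by
    funext x
    show F ⟦π x⟧ = F ⟦x⟧
    exact congrArg F (Quotient.sound (show π.SameCycle x (π x) from ⟨1, by simp⟩).symm)⟩
  left_inv g := rfl
  right_inv F := by funext q; induction q using Quotient.ind; rfl

lemma supp_ne {π : Perm (Fin n)} {c : Perm (Fin n)} (hc : c ∈ π.cycleFactorsFinset) :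
    c.support.Nonempty :=
  Equiv.Perm.IsCycle.nonempty_support (Equiv.Perm.mem_cycleFactorsFinset_iff.mp hc).1

/-- The cycles of `π` (as a quotient) are: the nontrivial cycles, plus the fixed points. -/
noncomputable def quotEquiv (π : Perm (Fin n)) :
    Quotient (SameCycle.setoid π) ≃
      {c // c ∈ π.cycleFactorsFinset} ⊕ {x : Fin n // x ∉ π.support} where
  toFun := Quotient.lift
    (fun x => if h : x ∈ π.support then
        Sum.inl ⟨π.cycleOf x, cycleOf_mem_cycleFactorsFinset_iff.mpr h⟩
      else Sum.inr ⟨x, h⟩)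
    (by
      intro x y (hxy : π.SameCycle x y)
      by_cases hx : x ∈ π.support
      · have hy : y ∈ π.support := hxy.mem_support_iff.mp hx
        simp only [dif_pos hx, dif_pos hy]
        exact congrArg Sum.inl (Subtype.ext hxy.cycleOf_eq)
      · have hy : y ∉ π.support := fun h => hx (hxy.mem_support_iff.mpr h)
        have hxy' : x = y := by
          obtain ⟨i, hi⟩ := hxy
          rw [← hi]
          simp only [Finset.mem_coe, Perm.mem_support, not_not] at hx
          exact (π.zpow_apply_eq_self_of_apply_eq_self hx i).symm
        simp only [dif_neg hx, dif_neg hy, hxy'])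
  invFun := Sum.elim
    (fun c => ⟦(supp_ne c.2).choose⟧)
    (fun x => ⟦x.1⟧)
  left_inv := by
    intro q
    induction q using Quotient.ind with | _ x =>
    by_cases hx : x ∈ π.support
    · simp only [Quotient.lift_mk, dif_pos hx, Sum.elim_inl]
      refine Quotient.sound ?_
      have hmem := (supp_ne
        (cycleOf_mem_cycleFactorsFinset_iff.mpr hx)).choose_spec
      have := (Equiv.Perm.mem_support_cycleOf_iff.mp hmem).1
      exact this.symm
    · simp only [Quotient.lift_mk, dif_neg hx, Sum.elim_inr]
  right_inv := by
    rintro (⟨c, hc⟩ | ⟨x, hx⟩)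
    · have hmem := (supp_ne hc).choose_spec
      set y := (supp_ne hc).choose
      have hy : y ∈ π.support := by
        have h1 : c y ≠ y := Equiv.Perm.mem_support.mp hmem
        have h2 : c y = π y := (Equiv.Perm.mem_cycleFactorsFinset_iff.mp hc).2 y hmem
        exact Equiv.Perm.mem_support.mpr (h2 ▸ h1)
      simp only [Sum.elim_inl, Quotient.lift_mk, dif_pos hy]
      exact (dif_pos hy).trans (congrArg Sum.inl (Subtype.ext (Equiv.Perm.cycle_is_cycleOf hmem hc).symm))
    · simp only [Sum.elim_inr, Quotient.lift_mk, dif_neg hx]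

lemma card_quot (π : Perm (Fin n)) :
    Nat.card (Quotient (SameCycle.setoid π)) = cycleCount π := by
  rw [Nat.card_congr (quotEquiv π), Nat.card_sum, cycleCount]
  congr 1
  · rw [Nat.card_eq_fintype_card, Fintype.card_coe, cycleType_def, Multiset.card_map]
    rfl
  · rw [Nat.card_eq_fintype_card]
    rw [Fintype.card_subtype_compl, Fintype.card_coe, Fintype.card_fin]

lemma card_fixed (π : Perm (Fin n)) :
    Nat.card {g : Fin n → Fin d // g ∘ ⇑π = g} = d ^ cycleCount π := by
  rw [Nat.card_congr (fixedEquiv π), Nat.card_fun, Nat.card_eq_fintype_card, Fintype.card_fin,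
    card_quot]

lemma univ_val_map_perm (π : Perm (Fin n)) :
    Finset.univ.val.map ⇑π = (Finset.univ : Finset (Fin n)).val := by
  have h := Finset.map_univ_equiv π
  calc Finset.univ.val.map ⇑π = (Finset.univ.map π.toEmbedding).val := by
        rw [Finset.map_val]; rfl
    _ = Finset.univ.val := by rw [h]

lemma multiset_map_comp_perm (g : Fin n → Fin d) (π : Perm (Fin n)) :
    Finset.univ.val.map (g ∘ ⇑π) = Finset.univ.val.map g := by
  rw [← Multiset.map_map, univ_val_map_perm]

lemma map_univ_eq_ofFn (g : Fin n → Fin d) :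
    Finset.univ.val.map g = ↑(List.ofFn g) := by
  have : (Finset.univ : Finset (Fin n)).val = ↑(List.finRange n) := rfl
  rw [this, List.ofFn_eq_map]
  rfl

/-- Equal multisets of values means equal up to a permutation of the domain. -/
lemma exists_perm_of_map_eq {g h : Fin n → Fin d}
    (he : Finset.univ.val.map g = Finset.univ.val.map h) :
    ∃ π : Perm (Fin n), g = h ∘ ⇑π := by
  have hperm : (List.ofFn g).Perm (List.ofFn h) := by
    rw [← Multiset.coe_eq_coe, ← map_univ_eq_ofFn, ← map_univ_eq_ofFn, he]
  have h1 : (List.ofFn (g ∘ ⇑(Tuple.sort g))).Perm (List.ofFn (h ∘ ⇑(Tuple.sort h))) :=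
    ((Equiv.Perm.ofFn_comp_perm (Tuple.sort g) g).trans hperm).trans
      (Equiv.Perm.ofFn_comp_perm (Tuple.sort h) h).symm
  have hs1 : (List.ofFn (g ∘ ⇑(Tuple.sort g))).Pairwise (· ≤ ·) :=
    (List.sortedLE_ofFn_iff.mpr (Tuple.monotone_sort g)).pairwise
  have hs2 : (List.ofFn (h ∘ ⇑(Tuple.sort h))).Pairwise (· ≤ ·) :=
    (List.sortedLE_ofFn_iff.mpr (Tuple.monotone_sort h)).pairwise
  have heq : g ∘ ⇑(Tuple.sort g) = h ∘ ⇑(Tuple.sort h) :=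
    List.ofFn_injective (List.Perm.eq_of_pairwise' hs1 hs2 h1)
  refine ⟨(Tuple.sort g)⁻¹.trans (Tuple.sort h), ?_⟩
  funext x
  have := congrFun heq ((Tuple.sort g)⁻¹ x)
  simpa using this

lemma dma_smul (a : (Perm (Fin n))ᵈᵐᵃ) (g : Fin n → Fin d) :
    a • g = g ∘ ⇑(DomMulAct.mk.symm a) := by
  funext x
  exact DomMulAct.smul_apply a g x

noncomputable def symF :
    orbitRel.Quotient (Perm (Fin n))ᵈᵐᵃ (Fin n → Fin d) → Sym (Fin d) n :=
  Quotient.lift (fun g => (⟨Finset.univ.val.map g, by simp⟩ : Sym (Fin d) n))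
    (by
      intro g h hr
      have hr' : g ∈ orbit (Perm (Fin n))ᵈᵐᵃ h := hr
      obtain ⟨a, ha⟩ := MulAction.mem_orbit_iff.mp hr'
      have : g = h ∘ ⇑(DomMulAct.mk.symm a) := by rw [← ha, dma_smul]
      subst this
      exact Subtype.ext (multiset_map_comp_perm h _))

lemma symF_bij : Function.Bijective (symF (n := n) (d := d)) := by
  constructor
  · intro q₁ q₂
    induction q₁ using Quotient.ind with | _ g =>
    induction q₂ using Quotient.ind with | _ h =>
    intro he
    have he' : Finset.univ.val.map g = Finset.univ.val.map h := congrArg Subtype.val he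
    obtain ⟨π, hπ⟩ := exists_perm_of_map_eq he'
    refine Quotient.sound ?_
    show g ∈ orbit (Perm (Fin n))ᵈᵐᵃ h
    refine ⟨DomMulAct.mk π, ?_⟩
    show (DomMulAct.mk π) • h = g
    rw [dma_smul]; simp [hπ]
  · rintro ⟨m, hm⟩
    obtain ⟨l, rfl⟩ := Quotient.exists_rep m
    have hl : l.length = n := by simpa using hm
    refine ⟨⟦fun i => l.get (Fin.cast hl.symm i)⟧, ?_⟩
    refine Subtype.ext ?_
    show Finset.univ.val.map (fun i => l.get (Fin.cast hl.symm i)) = (⟦l⟧ : Multiset (Fin d))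
    rw [map_univ_eq_ofFn]
    have : List.ofFn (fun i => l.get (Fin.cast hl.symm i)) = l := by
      apply List.ext_getElem
      · simp [hl]
      · intro i h1 h2
        simp [List.getElem_ofFn]
        try rfl
    rw [this]
    rfl

/-- Burnside count: `∑_{π ∈ S_n} d^{c(π)} = n! · C(d+n−1, n)`. -/
lemma key_count (n d : ℕ) :
    ∑ π : Perm (Fin n), d ^ cycleCount π = n.factorial * (d + n - 1).choose n := by
  classical
  letI : Fintype ((Perm (Fin n))ᵈᵐᵃ) := Fintype.ofEquiv _ (DomMulAct.mk (M := Perm (Fin n)))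
  letI : ∀ a : (Perm (Fin n))ᵈᵐᵃ, Fintype (fixedBy (Fin n → Fin d) a) :=
    fun a => Fintype.ofFinite _
  letI : Fintype (orbitRel.Quotient (Perm (Fin n))ᵈᵐᵃ (Fin n → Fin d)) :=
    Fintype.ofFinite _
  have hb := MulAction.sum_card_fixedBy_eq_card_orbits_mul_card_group
    ((Perm (Fin n))ᵈᵐᵃ) (Fin n → Fin d)
  have hls : ∑ a : (Perm (Fin n))ᵈᵐᵃ, Fintype.card (fixedBy (Fin n → Fin d) a)
      = ∑ π : Perm (Fin n), d ^ cycleCount π := by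
    rw [← Fintype.sum_equiv (DomMulAct.mk (M := Perm (Fin n)))
      (fun π => Fintype.card (fixedBy (Fin n → Fin d) (DomMulAct.mk π)))
      (fun a => Fintype.card (fixedBy (Fin n → Fin d) a)) (fun π => rfl)]
    refine Finset.sum_congr rfl fun π _ => ?_
    rw [← Nat.card_eq_fintype_card, ← card_fixed (d := d) π]
    refine Nat.card_congr (Equiv.subtypeEquivRight fun g => ?_)
    rw [MulAction.mem_fixedBy, dma_smul]
    simp
  have hΩ : Fintype.card (orbitRel.Quotient (Perm (Fin n))ᵈᵐᵃ (Fin n → Fin d))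
      = (d + n - 1).choose n := by
    rw [Fintype.card_congr (Equiv.ofBijective _ (symF_bij (n := n) (d := d))),
      Sym.card_sym_eq_multichoose, Nat.multichoose_eq, Fintype.card_fin]
  have hα : Fintype.card ((Perm (Fin n))ᵈᵐᵃ) = n.factorial := by
    rw [Fintype.card_congr (DomMulAct.mk (M := Perm (Fin n))).symm, Fintype.card_perm,
      Fintype.card_fin]
  rw [hls, hΩ, hα, Nat.mul_comm] at hb
  exact hb

end Aux

/-- For `n ≥ 1` and `d ≥ n`, the Gram matrix
`G(σ,τ) = d^{c(στ⁻¹)}` of the permutation operators on `(ℂ^d)^{⊗n}` is invertible,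
and each column of the Weingarten matrix `W = G⁻¹` sums to
`1/(n! · C(d+n−1, n))`. -/
theorem weingarten_column_sum
    (n d : ℕ) (hn : 1 ≤ n) (hd : n ≤ d)
    (G : Matrix (Equiv.Perm (Fin n)) (Equiv.Perm (Fin n)) ℂ)
    (hG : ∀ σ τ : Equiv.Perm (Fin n), G σ τ = (d : ℂ) ^ cycleCount (σ * τ⁻¹)) :
    IsUnit G ∧
      ∀ τ : Equiv.Perm (Fin n),
        ∑ σ : Equiv.Perm (Fin n), G⁻¹ σ τ =
          1 / ((n.factorial : ℂ) * ((Nat.choose (d + n - 1) n : ℕ) : ℂ)) := by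
  classical
  -- entries of G as counting sums
  have hG' : ∀ σ τ : Equiv.Perm (Fin n),
      G σ τ = ∑ g : Fin n → Fin d, (if g ∘ ⇑σ = g ∘ ⇑τ then (1 : ℂ) else 0) := by
    intro σ τ
    rw [hG σ τ]
    have h1 : Nat.card {g : Fin n → Fin d // g ∘ ⇑(σ * τ⁻¹) = g} = d ^ cycleCount (σ * τ⁻¹) :=
      card_fixed _
    have h2 : Nat.card {g : Fin n → Fin d // g ∘ ⇑(σ * τ⁻¹) = g}
        = Nat.card {g : Fin n → Fin d // g ∘ ⇑σ = g ∘ ⇑τ} := by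
      refine Nat.card_congr (Equiv.subtypeEquivRight fun g => ?_)
      constructor
      · intro h
        funext x
        have := congrFun h (τ x)
        simpa using this
      · intro h
        funext x
        have := congrFun h (τ⁻¹ x)
        simpa using this
    have h3 : Nat.card {g : Fin n → Fin d // g ∘ ⇑σ = g ∘ ⇑τ}
        = ∑ g : Fin n → Fin d, (if g ∘ ⇑σ = g ∘ ⇑τ then (1 : ℕ) else 0) := by
      rw [Nat.card_eq_fintype_card, Fintype.card_subtype, Finset.card_filter]
    have := h1.symm.trans (h2.trans h3)
    calc (d : ℂ) ^ cycleCount (σ * τ⁻¹)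
        = ((d ^ cycleCount (σ * τ⁻¹) : ℕ) : ℂ) := by push_cast; ring
      _ = ((∑ g : Fin n → Fin d, (if g ∘ ⇑σ = g ∘ ⇑τ then (1 : ℕ) else 0) : ℕ) : ℂ) := by
          rw [← this]
      _ = ∑ g : Fin n → Fin d, (if g ∘ ⇑σ = g ∘ ⇑τ then (1 : ℂ) else 0) := by
          push_cast; exact Finset.sum_congr rfl fun g _ => by split_ifs <;> simp
  -- invertibility
  have hdet : G.det ≠ 0 := by
    intro h0
    obtain ⟨v, hv0, hGv⟩ := (Matrix.exists_mulVec_eq_zero_iff).mpr h0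
    set y : (Fin n → Fin d) → (Fin n → Fin d) → ℂ :=
      fun g h => ∑ σ : Equiv.Perm (Fin n), if g ∘ ⇑σ = h then v σ else 0 with hy
    -- each coefficient of the expansion vanishes
    have hyz : ∀ g h, y g h = 0 := by
      -- the quadratic form vanishes
      have hSz : ∑ q : Equiv.Perm (Fin n) × Equiv.Perm (Fin n),
          (starRingEnd ℂ) (v q.1) * v q.2 * G q.1 q.2 = 0 := by
        rw [Fintype.sum_prod_type]
        refine Finset.sum_eq_zero fun σ _ => ?_
        have h1 : ∑ τ : Equiv.Perm (Fin n), G σ τ * v τ = 0 := congrFun hGv σ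
        calc ∑ τ : Equiv.Perm (Fin n), (starRingEnd ℂ) (v σ) * v τ * G σ τ
            = (starRingEnd ℂ) (v σ) * ∑ τ : Equiv.Perm (Fin n), G σ τ * v τ := by
              rw [Finset.mul_sum]; exact Finset.sum_congr rfl fun τ _ => by ring
          _ = 0 := by rw [h1, mul_zero]
      -- rewrite the quadratic form as a sum of squares
      have hF : ∀ q : Equiv.Perm (Fin n) × Equiv.Perm (Fin n),
          (starRingEnd ℂ) (v q.1) * v q.2 * G q.1 q.2
          = ∑ p : (Fin n → Fin d) × (Fin n → Fin d),
            (if p.1 ∘ ⇑(q.1) = p.2 ∧ p.1 ∘ ⇑(q.2) = p.2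
              then (starRingEnd ℂ) (v q.1) * v q.2 else 0) := by
        rintro ⟨σ, τ⟩
        dsimp only
        rw [hG' σ τ, Fintype.sum_prod_type, Finset.mul_sum]
        refine Finset.sum_congr rfl fun g _ => ?_
        by_cases hgt : g ∘ ⇑σ = g ∘ ⇑τ
        · rw [if_pos hgt, mul_one]
          have hcong : ∀ h : Fin n → Fin d,
              (if g ∘ ⇑σ = h ∧ g ∘ ⇑τ = h then (starRingEnd ℂ) (v σ) * v τ else 0)
              = (if g ∘ ⇑σ = h then (starRingEnd ℂ) (v σ) * v τ else 0) := by
            intro h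
            refine if_congr ?_ rfl rfl
            constructor
            · exact fun hh => hh.1
            · exact fun hh => ⟨hh, hgt ▸ hh⟩
          rw [Finset.sum_congr rfl fun h _ => hcong h]
          rw [Finset.sum_ite_eq Finset.univ (g ∘ ⇑σ)
            (fun _ => (starRingEnd ℂ) (v σ) * v τ)]
          simp
        · rw [if_neg hgt, mul_zero]
          refine (Finset.sum_eq_zero fun h _ => ?_).symm
          rw [if_neg]
          rintro ⟨h1, h2⟩
          exact hgt (h1.trans h2.symm)
      have hT : ∑ q : Equiv.Perm (Fin n) × Equiv.Perm (Fin n),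
          (starRingEnd ℂ) (v q.1) * v q.2 * G q.1 q.2
          = ∑ p : (Fin n → Fin d) × (Fin n → Fin d),
              (starRingEnd ℂ) (y p.1 p.2) * y p.1 p.2 := by
        rw [Finset.sum_congr rfl fun q _ => hF q, Finset.sum_comm]
        refine Finset.sum_congr rfl fun p _ => ?_
        have hconj : (starRingEnd ℂ) (y p.1 p.2)
            = ∑ σ : Equiv.Perm (Fin n),
                (if p.1 ∘ ⇑σ = p.2 then (starRingEnd ℂ) (v σ) else 0) := by
          rw [hy]
          dsimp only
          rw [map_sum]
          exact Finset.sum_congr rfl fun σ _ => by rw [apply_ite (starRingEnd ℂ), map_zero]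
        have hy2 : y p.1 p.2 = ∑ τ : Equiv.Perm (Fin n),
            (if p.1 ∘ ⇑τ = p.2 then v τ else 0) := by rw [hy]
        rw [hconj, hy2, Finset.sum_mul_sum, Fintype.sum_prod_type]
        refine Finset.sum_congr rfl fun σ _ => Finset.sum_congr rfl fun τ _ => ?_
        dsimp only
        split_ifs with h1 h2 h3 h4 <;> simp_all
      -- sum of squares is zero, hence each term is zero
      have hsq : ∑ p : (Fin n → Fin d) × (Fin n → Fin d), Complex.normSq (y p.1 p.2) = 0 := by
        have hC : ∑ p : (Fin n → Fin d) × (Fin n → Fin d),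
            ((Complex.normSq (y p.1 p.2) : ℝ) : ℂ) = 0 :=
          (Finset.sum_congr rfl fun p _ => Complex.normSq_eq_conj_mul_self).trans
            (hT.symm.trans hSz)
        exact_mod_cast hC
      intro g h
      have hterm : Complex.normSq (y g h) = 0 := by
        have := (Finset.sum_eq_zero_iff_of_nonneg
          (fun p _ => Complex.normSq_nonneg (y p.1 p.2))).mp hsq (g, h) (Finset.mem_univ _)
        exact this
      exact Complex.normSq_eq_zero.mp hterm
    -- evaluate at an injective function
    have hvz : v = 0 := by
      funext τ₀
      have g₀inj : Function.Injective (Fin.castLE hd) := Fin.castLE_injective hd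
      have hz := hyz (Fin.castLE hd) ((Fin.castLE hd) ∘ ⇑τ₀)
      have hsum : ∑ σ : Equiv.Perm (Fin n),
          (if (Fin.castLE hd) ∘ ⇑σ = (Fin.castLE hd) ∘ ⇑τ₀ then v σ else 0) = v τ₀ := by
        rw [Finset.sum_eq_single τ₀]
        · simp
        · intro σ _ hne
          rw [if_neg]
          intro hc
          apply hne
          have : ⇑σ = ⇑τ₀ := funext fun x => g₀inj (congrFun hc x)
          exact Equiv.coe_fn_injective this
        · intro h; exact absurd (Finset.mem_univ τ₀) h
      have hEq : y (Fin.castLE hd) ((Fin.castLE hd) ∘ ⇑τ₀) = v τ₀ := by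
        simp only [hy]
        exact hsum
      show v τ₀ = (0 : Equiv.Perm (Fin n) → ℂ) τ₀
      rw [← hEq, hz]
      rfl
    exact hv0 hvz
  have hunit : IsUnit G := (Matrix.isUnit_iff_isUnit_det G).mpr (Ne.isUnit hdet)
  refine ⟨hunit, fun τ => ?_⟩
  -- column sums of G
  set D : ℂ := (n.factorial : ℂ) * ((Nat.choose (d + n - 1) n : ℕ) : ℂ) with hDdef
  have hDnat : D = ((n.factorial * (d + n - 1).choose n : ℕ) : ℂ) := by push_cast; ring
  have hDne : D ≠ 0 := by
    rw [hDnat]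
    have h1 : 0 < n.factorial := Nat.factorial_pos n
    have h2 : 0 < (d + n - 1).choose n := by
      apply Nat.choose_pos
      omega
    have h3 : 0 < n.factorial * (d + n - 1).choose n := Nat.mul_pos h1 h2
    exact_mod_cast h3.ne'
  have hcol : ∀ ρ : Equiv.Perm (Fin n), ∑ σ : Equiv.Perm (Fin n), G σ ρ = D := by
    intro ρ
    have : ∑ σ : Equiv.Perm (Fin n), G σ ρ
        = ∑ π : Equiv.Perm (Fin n), (d : ℂ) ^ cycleCount π := by
      rw [Fintype.sum_equiv (Equiv.mulRight ρ⁻¹)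
        (fun σ => G σ ρ) (fun π => (d : ℂ) ^ cycleCount π)
        (fun σ => by
          show G σ ρ = (d : ℂ) ^ cycleCount ((Equiv.mulRight ρ⁻¹) σ)
          rw [hG σ ρ]; rfl)]
    rw [this, hDnat, ← key_count n d]
    push_cast
    ring
  -- conclude
  have hmul : G * G⁻¹ = 1 := Matrix.mul_nonsing_inv G (Ne.isUnit hdet)
  have hkey : D * ∑ σ : Equiv.Perm (Fin n), G⁻¹ σ τ = 1 := by
    calc D * ∑ σ : Equiv.Perm (Fin n), G⁻¹ σ τ
        = ∑ σ : Equiv.Perm (Fin n), (∑ ρ : Equiv.Perm (Fin n), G ρ σ) * G⁻¹ σ τ := by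
          rw [Finset.mul_sum]
          exact Finset.sum_congr rfl fun σ _ => by rw [hcol σ]
      _ = ∑ σ : Equiv.Perm (Fin n), ∑ ρ : Equiv.Perm (Fin n), G ρ σ * G⁻¹ σ τ := by
          exact Finset.sum_congr rfl fun σ _ => Finset.sum_mul _ _ _
      _ = ∑ ρ : Equiv.Perm (Fin n), ∑ σ : Equiv.Perm (Fin n), G ρ σ * G⁻¹ σ τ :=
          Finset.sum_comm
      _ = ∑ ρ : Equiv.Perm (Fin n), (G * G⁻¹) ρ τ := rfl
      _ = ∑ ρ : Equiv.Perm (Fin n), (1 : Matrix _ _ ℂ) ρ τ := by rw [hmul]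
      _ = 1 := by
          simp [Matrix.one_apply]
  rw [mul_comm] at hkey
  exact eq_one_div_of_mul_eq_one_left hkey
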